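/- Suppose 0 < β < 1, 0 ≤ G(w̄) < 1, f is strictly concave with f' > 0, w̄ < Z, and dw̄/dR = 1 + M'_R / ((1/β - G(w̄)) · f'(w̄ - R)) with M'_R = -∫_{w̄}^{Z} f'(w'-R) g(w') dw' and ∫_{w̄}^{Z} g(w') dw' = 1 - G(w̄). Then 0 < dw̄/dR < 1. In particular dw̄/dR > (1-β)/(1 - β G(w̄)) > 0. -/

import Mathlib

open intervalIntegral

/-- the reservation wage responds to the reference point
strictly positively, but less than one-for-one:
`(1-β)/(1-β G(w̄)) < dw̄/dR < 1` and `(1-β)/(1-β G(w̄)) > 0`. -/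
theorem mccall_reservation_wage_bounds
    (β Z R wbar Gw d : ℝ) (f g : ℝ → ℝ)
    (hβ0 : 0 < β) (hβ1 : β < 1)
    (hG0 : 0 ≤ Gw) (hG1 : Gw < 1)
    (hf : Differentiable ℝ f)
    (hf'pos : ∀ x, 0 < deriv f x)
    (hf'anti : StrictAnti (deriv f))
    (hf'c : Continuous (deriv f))
    (hg : Continuous g)
    (hgpos : ∀ x ∈ Set.Icc wbar Z, 0 < g x)
    (hwZ : wbar < Z)
    (hgint : (∫ w' in wbar..Z, g w') = 1 - Gw)
    (hd : d = 1 + (-(∫ w' in wbar..Z, deriv f (w' - R) * g w'))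
                    / ((1 / β - Gw) * deriv f (wbar - R))) :
    0 < d ∧ d < 1 ∧ (1 - β) / (1 - β * Gw) < d ∧ 0 < (1 - β) / (1 - β * Gw) := by
  set A := ∫ w' in wbar..Z, deriv f (w' - R) * g w' with hA
  set B := deriv f (wbar - R) with hBdef
  have hB : 0 < B := hf'pos _
  have hcont : Continuous fun w' => deriv f (w' - R) * g w' :=
    (hf'c.comp (continuous_id.sub continuous_const)).mul hg
  -- A > 0
  have hA0 : 0 < A := by
    apply intervalIntegral_pos_of_pos_on (hcont.intervalIntegrable _ _)
    · intro x hx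
      exact mul_pos (hf'pos _) (hgpos x ⟨hx.1.le, hx.2.le⟩)
    · exact hwZ
  -- A < (1 - Gw) * B
  have hAlt : A < (1 - Gw) * B := by
    have h1 : A < ∫ w' in wbar..Z, B * g w' := by
      apply integral_lt_integral_of_continuousOn_of_le_of_exists_lt hwZ
        hcont.continuousOn (continuous_const.mul hg).continuousOn
      · intro x hx
        have hlt : deriv f (x - R) ≤ B := by
          apply (hf'anti.le_iff_ge).2
          linarith [hx.1]
        exact mul_le_mul_of_nonneg_right hlt (hgpos x ⟨hx.1.le, hx.2⟩).le
      · refine ⟨Z, ⟨hwZ.le, le_refl _⟩, ?_⟩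
        have hlt : deriv f (Z - R) < B := hf'anti (by linarith)
        exact mul_lt_mul_of_pos_right hlt (hgpos Z ⟨hwZ.le, le_refl _⟩)
    have h2 : (∫ w' in wbar..Z, B * g w') = B * (1 - Gw) := by
      rw [intervalIntegral.integral_const_mul, hgint]
    rw [h2] at h1; linarith [h1]
  have hden1 : 0 < 1 - β * Gw := by nlinarith
  have hden2 : 0 < 1 / β - Gw := by
    have : 1 < 1 / β := one_lt_one_div hβ0 hβ1
    linarith
  have hD : 0 < (1 / β - Gw) * B := mul_pos hden2 hB
  have hlb : (1 - β) / (1 - β * Gw) < d := by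
    rw [hd, neg_div]
    have key : A / ((1 / β - Gw) * B) < β * (1 - Gw) / (1 - β * Gw) := by
      rw [div_lt_div_iff₀ hD hden1]
      have hβne : β ≠ 0 := ne_of_gt hβ0
      have heq : (1 / β - Gw) * B * β = (1 - β * Gw) * B := by
        field_simp; try ring
      nlinarith [mul_lt_mul_of_pos_right hAlt hden1, heq, hB]
    have h3 : (1 - β) / (1 - β * Gw) = 1 - β * (1 - Gw) / (1 - β * Gw) := by
      field_simp
      try ring
    rw [h3]
    linarith [key]
  have hub : d < 1 := by
    rw [hd]
    have : -(A) / ((1 / β - Gw) * B) < 0 := div_neg_of_neg_of_pos (by linarith) hD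
    linarith
  have hlb0 : 0 < (1 - β) / (1 - β * Gw) := div_pos (by linarith) hden1
  exact ⟨lt_trans hlb0 hlb, hub, hlb, hlb0⟩
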